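/- In the discrete-time standard Dynkin game with X ≤ Z ≤ Y, the backward-induction process V satisfies, for each t, V_t = ess inf over stopping times σ ∈ T_[t,T] of ess sup over stopping times τ ∈ T_[t,T] of E[R(τ,σ)|F_t] = ess sup over τ of ess inf over σ of E[R(τ,σ)|F_t]; i.e., the game has a value equal to V_t. -/

import Mathlib

open MeasureTheory Filter Set

/-- Payoff of the Dynkin game. -/
noncomputable def payoffD {Ω : Type*} (X Y Z : ℕ → Ω → ℝ) (τ σ : Ω → ℕ) (ω : Ω) : ℝ :=
  if τ ω < σ ω then X (τ ω) ω else if σ ω < τ ω then Y (σ ω) ω else Z (σ ω) ω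

/-- `g` is the essential supremum of the family `f` (in the a.e. order). -/
def IsEssSupFam {Ω : Type*} [MeasurableSpace Ω] (μ : Measure Ω) {ι : Sort*}
    (f : ι → Ω → ℝ) (g : Ω → ℝ) : Prop :=
  (∀ i, f i ≤ᵐ[μ] g) ∧ ∀ h : Ω → ℝ, (∀ i, f i ≤ᵐ[μ] h) → g ≤ᵐ[μ] h

/-- `g` is the essential infimum of the family `f` (in the a.e. order). -/
def IsEssInfFam {Ω : Type*} [MeasurableSpace Ω] (μ : Measure Ω) {ι : Sort*}
    (f : ι → Ω → ℝ) (g : Ω → ℝ) : Prop :=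
  (∀ i, g ≤ᵐ[μ] f i) ∧ ∀ h : Ω → ℝ, (∀ i, h ≤ᵐ[μ] f i) → h ≤ᵐ[μ] g

section Aux

variable {Ω : Type*} {m0 : MeasurableSpace Ω} {μ : Measure Ω} {ℱ : Filtration ℕ m0}

lemma untopA_natCast_aux (n : ℕ) : (n : WithTop ℕ).untopA = n := rfl

lemma natCast_min_withTop_aux (a b : ℕ) :
    ((min a b : ℕ) : WithTop ℕ) = min (a : WithTop ℕ) b := WithTop.coe_min a b

lemma measurable_of_isStoppingTime_nat {τ : Ω → ℕ} {T : ℕ} (hτ : IsStoppingTime ℱ (fun ω => (τ ω : WithTop ℕ)))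
    (hb : ∀ ω, τ ω ≤ T) : Measurable τ := by
  have h := ((hτ.measurable_of_le (fun ω => WithTop.coe_le_coe.mpr (hb ω))).untopA).mono
    (ℱ.le T) le_rfl
  simpa only [untopA_natCast_aux] using h

lemma payoffD_integrable [IsFiniteMeasure μ] {T : ℕ} {X Y Z : ℕ → Ω → ℝ}
    (hXi : ∀ t, Integrable (X t) μ) (hYi : ∀ t, Integrable (Y t) μ)
    (hZi : ∀ t, Integrable (Z t) μ)
    {τ σ : Ω → ℕ} (hτ : IsStoppingTime ℱ (fun ω => (τ ω : WithTop ℕ))) (hσ : IsStoppingTime ℱ (fun ω => (σ ω : WithTop ℕ)))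
    (hτb : ∀ ω, τ ω ≤ T) (hσb : ∀ ω, σ ω ≤ T) :
    Integrable (payoffD X Y Z τ σ) μ := by
  have hτm : Measurable τ := measurable_of_isStoppingTime_nat hτ hτb
  have hσm : Measurable σ := measurable_of_isStoppingTime_nat hσ hσb
  have hs1 : MeasurableSet {ω | τ ω < σ ω} := measurableSet_lt hτm hσm
  have hs2 : MeasurableSet {ω | σ ω < τ ω} := measurableSet_lt hσm hτm
  have h1 : Integrable (stoppedValue X (fun ω => (τ ω : WithTop ℕ))) μ :=
    integrable_stoppedValue ℕ hτ hXi (fun ω => WithTop.coe_le_coe.mpr (hτb ω))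
  have h2 : Integrable (stoppedValue Y (fun ω => (σ ω : WithTop ℕ))) μ :=
    integrable_stoppedValue ℕ hσ hYi (fun ω => WithTop.coe_le_coe.mpr (hσb ω))
  have h3 : Integrable (stoppedValue Z (fun ω => (σ ω : WithTop ℕ))) μ :=
    integrable_stoppedValue ℕ hσ hZi (fun ω => WithTop.coe_le_coe.mpr (hσb ω))
  have heq : payoffD X Y Z τ σ = fun ω =>
      {ω | τ ω < σ ω}.indicator (stoppedValue X (fun ω => (τ ω : WithTop ℕ))) ω
      + {ω | σ ω < τ ω}.indicator (stoppedValue Y (fun ω => (σ ω : WithTop ℕ))) ω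
      + ({ω | τ ω < σ ω} ∪ {ω | σ ω < τ ω})ᶜ.indicator
        (stoppedValue Z (fun ω => (σ ω : WithTop ℕ))) ω := by
    funext ω
    simp only [payoffD, Set.indicator_apply, Set.mem_setOf_eq, Set.mem_compl_iff,
      Set.mem_union, stoppedValue, untopA_natCast_aux]
    rcases lt_trichotomy (τ ω) (σ ω) with h | h | h
    · simp [h, asymm h]
    · simp [h, lt_irrefl]
    · simp [h, asymm h]
  rw [heq]
  exact ((h1.indicator hs1).add (h2.indicator hs2)).add (h3.indicator (hs1.union hs2).compl)

lemma keyA [IsProbabilityMeasure μ] {T t : ℕ} (ht : t ≤ T)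
    {X Y Z V : ℕ → Ω → ℝ}
    (hXa : Adapted ℱ X) (hVa : Adapted ℱ V)
    (hXi : ∀ s, Integrable (X s) μ) (hYi : ∀ s, Integrable (Y s) μ)
    (hZi : ∀ s, Integrable (Z s) μ) (hVi : ∀ s, Integrable (V s) μ)
    (hXY : ∀ s ω, X s ω ≤ Y s ω)
    (hXZ : ∀ s ω, X s ω ≤ Z s ω)
    (hXV : ∀ s, s < T → X s ≤ᵐ[μ] V s) (hVY : ∀ s, s ≤ T → V s ≤ᵐ[μ] Y s)
    (htermX : ∀ ω, X T ω = Z T ω)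
    (hVT : ∀ ω, V T ω = Z T ω)
    (hV : ∀ s, s < T →
      V s =ᵐ[μ] fun ω => min (Y s ω) (max (X s ω) ((μ[V (s + 1) | ℱ s]) ω))) :
    ∃ τs : Ω → ℕ, IsStoppingTime ℱ (fun ω => (τs ω : WithTop ℕ)) ∧ (∀ ω, τs ω ∈ Set.Icc t T) ∧
      ∀ σ : Ω → ℕ, IsStoppingTime ℱ (fun ω => (σ ω : WithTop ℕ)) → (∀ ω, σ ω ∈ Set.Icc t T) →
        V t ≤ᵐ[μ] μ[payoffD X Y Z τs σ | ℱ t] := by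
  classical
  set A : Ω → Set ℕ := fun ω => {s | t ≤ s ∧ V s ω = X s ω} with hA
  have hTA : ∀ ω, T ∈ A ω := fun ω => ⟨ht, by rw [hVT, htermX]⟩
  set τs : Ω → ℕ := fun ω => sInf (A ω) with hτsdef
  have hmem : ∀ ω, τs ω ∈ A ω := fun ω => Nat.sInf_mem ⟨T, hTA ω⟩
  have hτt : ∀ ω, t ≤ τs ω := fun ω => (hmem ω).1
  have hτT : ∀ ω, τs ω ≤ T := fun ω => Nat.sInf_le (hTA ω)
  have hτeq : ∀ ω, V (τs ω) ω = X (τs ω) ω := fun ω => (hmem ω).2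
  have hτne : ∀ ω s, t ≤ s → s < τs ω → V s ω ≠ X s ω := by
    intro ω s hts hs hVX
    exact Nat.notMem_of_lt_sInf hs ⟨hts, hVX⟩
  have hτst : IsStoppingTime ℱ (fun ω => (τs ω : WithTop ℕ)) := by
    intro n
    simp only [Nat.cast_withTop, WithTop.coe_le_coe]
    have hset : {ω | τs ω ≤ n} = ⋃ s ∈ Set.Icc t n, {ω | V s ω = X s ω} := by
      ext ω
      simp only [Set.mem_setOf_eq, Set.mem_iUnion, Set.mem_Icc, exists_prop]
      constructor
      · intro h
        exact ⟨τs ω, ⟨hτt ω, h⟩, hτeq ω⟩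
      · rintro ⟨s, ⟨hts, hsn⟩, hvx⟩
        exact le_trans (Nat.sInf_le ⟨hts, hvx⟩) hsn
    rw [show {ω | τs ω ≤ n} = _ from hset]
    refine MeasurableSet.biUnion (Set.to_countable _) (fun s hs => ?_)
    have h1 : Measurable[ℱ n] (V s) := (hVa s).mono (ℱ.mono hs.2) le_rfl
    have h2 : Measurable[ℱ n] (X s) := (hXa s).mono (ℱ.mono hs.2) le_rfl
    exact measurableSet_eq_fun h1 h2
  refine ⟨τs, hτst, fun ω => ⟨hτt ω, hτT ω⟩, ?_⟩
  intro σ hσ hσb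
  set ρ : Ω → ℕ := fun ω => min (τs ω) (σ ω) with hρdef
  have hρ : IsStoppingTime ℱ (fun ω => (ρ ω : WithTop ℕ)) := by
    show IsStoppingTime ℱ (fun ω => ((min (τs ω) (σ ω) : ℕ) : WithTop ℕ))
    simp only [natCast_min_withTop_aux]
    exact hτst.min hσ
  have hρt : ∀ ω, t ≤ ρ ω := fun ω => le_min (hτt ω) (hσb ω).1
  have hρT : ∀ ω, ρ ω ≤ T := fun ω => le_trans (min_le_left _ _) (hτT ω)
  set W : ℕ → Ω → ℝ := fun s => stoppedValue V (fun ω => ((min s (ρ ω) : ℕ) : WithTop ℕ))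
    with hWdef
  have hWst : ∀ s : ℕ, IsStoppingTime ℱ (fun ω => ((min s (ρ ω) : ℕ) : WithTop ℕ)) := fun s => by
    simp only [natCast_min_withTop_aux]
    exact (isStoppingTime_const ℱ s).min hρ
  have hWint : ∀ s, Integrable (W s) μ := fun s =>
    integrable_stoppedValue ℕ (hWst s) hVi
      (fun ω => WithTop.coe_le_coe.mpr (le_trans (min_le_left _ _) (le_max_left s T)))
  have hWmeas : ∀ s, StronglyMeasurable[ℱ s] (W s) := fun s =>
    stronglyMeasurable_stoppedValue_of_le
      hVa.stronglyAdapted.isStronglyProgressive_of_discrete (hWst s)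
      (fun ω => WithTop.coe_le_coe.mpr (min_le_left _ _))
  have hstep : ∀ s, t ≤ s → s < T → W s ≤ᵐ[μ] μ[W (s + 1) | ℱ s] := by
    intro s hts hsT
    set B : Set Ω := {ω | ¬ ρ ω ≤ s} with hB
    have hBmeas : MeasurableSet[ℱ s] B := by
      have hρs : MeasurableSet[ℱ s] {ω | ρ ω ≤ s} := by
        simpa only [Nat.cast_withTop, WithTop.coe_le_coe] using hρ s
      exact hρs.compl
    have hWeq : W (s + 1) = fun ω => W s ω
        + B.indicator (fun ω => V (s + 1) ω - V s ω) ω := by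
      funext ω
      by_cases h : ρ ω ≤ s
      · have hnB : ω ∉ B := fun hc => hc h
        simp only [hWdef, stoppedValue, untopA_natCast_aux, Set.indicator_of_notMem hnB, add_zero]
        rw [min_eq_right (h.trans (Nat.le_succ s)), min_eq_right h]
      · have hin : ω ∈ B := h
        simp only [hWdef, stoppedValue, untopA_natCast_aux, Set.indicator_of_mem hin]
        rw [min_eq_left (by omega : s + 1 ≤ ρ ω), min_eq_left (by omega : s ≤ ρ ω)]
        ring
    have hsubint : Integrable (fun ω => V (s + 1) ω - V s ω) μ := (hVi (s + 1)).sub (hVi s)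
    have h1int : Integrable (B.indicator (fun ω => V (s + 1) ω - V s ω)) μ :=
      hsubint.indicator (ℱ.le s B hBmeas)
    have hc1 : μ[W (s + 1)|ℱ s] =ᵐ[μ]
        μ[W s|ℱ s] + μ[B.indicator (fun ω => V (s + 1) ω - V s ω)|ℱ s] := by
      rw [hWeq]
      exact condExp_add (hWint s) h1int (ℱ s)
    have hc2 : μ[W s|ℱ s] = W s :=
      condExp_of_stronglyMeasurable (ℱ.le s) (hWmeas s) (hWint s)
    have hc3 : μ[B.indicator (fun ω => V (s + 1) ω - V s ω)|ℱ s] =ᵐ[μ]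
        B.indicator (μ[fun ω => V (s + 1) ω - V s ω|ℱ s]) :=
      condExp_indicator hsubint hBmeas
    have hc4 : μ[fun ω => V (s + 1) ω - V s ω|ℱ s] =ᵐ[μ]
        fun ω => (μ[V (s + 1)|ℱ s]) ω - V s ω := by
      have h := condExp_sub (m := ℱ s) (μ := μ) (hVi (s + 1)) (hVi s)
      rw [condExp_of_stronglyMeasurable (ℱ.le s) (hVa s).stronglyMeasurable (hVi s)] at h
      exact h
    have hcx : μ[W (s + 1)|ℱ s] =ᵐ[μ]
        fun ω => W s ω + B.indicator (fun ω => (μ[V (s + 1)|ℱ s]) ω - V s ω) ω := by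
      refine hc1.trans ?_
      rw [hc2]
      refine EventuallyEq.add EventuallyEq.rfl (hc3.trans ?_)
      filter_upwards [hc4] with ω h
      by_cases hb : ω ∈ B
      · simp only [Set.indicator_of_mem hb]; exact h
      · simp only [Set.indicator_of_notMem hb]
    have hpos : ∀ᵐ ω ∂μ, W s ω ≤ W s ω
        + B.indicator (fun ω => (μ[V (s + 1)|ℱ s]) ω - V s ω) ω := by
      filter_upwards [hV s hsT, hXV s hsT] with ω hVeq hXVle
      by_cases hb : ω ∈ B
      · have hρs : s < ρ ω := not_le.mp hb
        have hlt : s < τs ω := lt_of_lt_of_le hρs (min_le_left _ _)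
        have hne := hτne ω s hts hlt
        rcases max_cases (X s ω) ((μ[V (s + 1)|ℱ s]) ω) with ⟨hm, _⟩ | ⟨hm, _⟩
        · exfalso
          exact hne (by rw [hVeq, hm, min_eq_right (hXY s ω)])
        · have hle : V s ω ≤ (μ[V (s + 1)|ℱ s]) ω := by
            rw [hVeq, hm]; exact min_le_right _ _
          rw [Set.indicator_of_mem hb]
          linarith
      · rw [Set.indicator_of_notMem hb, add_zero]
    filter_upwards [hpos, hcx] with ω h1 h2
    rw [h2]
    exact h1
  have htower : ∀ s, t ≤ s → s ≤ T → V t ≤ᵐ[μ] μ[W s | ℱ t] := by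
    intro s hts
    induction s, hts using Nat.le_induction with
    | base =>
      intro _
      have hWt : W t = V t := by
        funext ω
        simp only [hWdef, stoppedValue, untopA_natCast_aux]
        rw [min_eq_left (hρt ω)]
      rw [hWt, condExp_of_stronglyMeasurable (ℱ.le t) (hVa t).stronglyMeasurable (hVi t)]
    | succ s hts ih =>
      intro hsT
      have hsT' : s < T := hsT
      have h1 := hstep s hts hsT'
      have h2 : μ[W (s + 1) | ℱ t] =ᵐ[μ] μ[μ[W (s + 1) | ℱ s] | ℱ t] :=
        (condExp_condExp_of_le (ℱ.mono hts) (ℱ.le s)).symm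
      have h3 : μ[W s | ℱ t] ≤ᵐ[μ] μ[μ[W (s + 1)|ℱ s] | ℱ t] :=
        condExp_mono (hWint s) integrable_condExp h1
      refine ((ih hsT'.le).trans h3).trans ?_
      filter_upwards [h2] with ω h
      rw [h]
  have hWT : W T = stoppedValue V (fun ω => (ρ ω : WithTop ℕ)) := by
    funext ω
    simp only [hWdef, stoppedValue, untopA_natCast_aux]
    rw [min_eq_right (hρT ω)]
  have hstop_le : stoppedValue V (fun ω => (ρ ω : WithTop ℕ)) ≤ᵐ[μ] payoffD X Y Z τs σ := by
    have hVYall : ∀ᵐ ω ∂μ, ∀ s, s ≤ T → V s ω ≤ Y s ω := by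
      rw [ae_all_iff]
      intro s
      by_cases hs : s ≤ T
      · filter_upwards [hVY s hs] with ω h _
        exact h
      · filter_upwards with ω hc
        exact absurd hc hs
    filter_upwards [hVYall] with ω hy
    show V (min (τs ω) (σ ω)) ω ≤ payoffD X Y Z τs σ ω
    simp only [payoffD]
    rcases lt_trichotomy (τs ω) (σ ω) with h | h | h
    · rw [if_pos h, min_eq_left h.le, hτeq ω]
    · rw [if_neg (by omega), if_neg (by omega), min_eq_left h.le, hτeq ω, h]
      exact hXZ (σ ω) ω
    · rw [if_neg (by omega), if_pos h, min_eq_right h.le]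
      exact hy (σ ω) (hσb ω).2
  have hfinal := htower T ht le_rfl
  rw [hWT] at hfinal
  have hpint : Integrable (payoffD X Y Z τs σ) μ :=
    payoffD_integrable hXi hYi hZi hτst hσ hτT (fun ω => (hσb ω).2)
  have hsint : Integrable (stoppedValue V (fun ω => (ρ ω : WithTop ℕ))) μ :=
    integrable_stoppedValue ℕ hρ hVi (fun ω => WithTop.coe_le_coe.mpr (hρT ω))
  exact hfinal.trans (condExp_mono hsint hpint hstop_le)

lemma neg_min_max_aux {a b c : ℝ} (h : b ≤ a) :
    -(min a (max b c)) = min (-b) (max (-a) (-c)) := by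
  simp only [min_def, max_def]
  split_ifs <;> linarith

lemma keyB [IsProbabilityMeasure μ] {T t : ℕ} (ht : t ≤ T)
    {X Y Z V : ℕ → Ω → ℝ}
    (hYa : Adapted ℱ Y) (hVa : Adapted ℱ V)
    (hXi : ∀ s, Integrable (X s) μ) (hYi : ∀ s, Integrable (Y s) μ)
    (hZi : ∀ s, Integrable (Z s) μ) (hVi : ∀ s, Integrable (V s) μ)
    (hXY : ∀ s ω, X s ω ≤ Y s ω)
    (hXZ : ∀ s ω, X s ω ≤ Z s ω)
    (hZY : ∀ s ω, Z s ω ≤ Y s ω)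
    (hXV : ∀ s, s < T → X s ≤ᵐ[μ] V s) (hVY : ∀ s, s ≤ T → V s ≤ᵐ[μ] Y s)
    (htermY : ∀ ω, Z T ω = Y T ω)
    (hVT : ∀ ω, V T ω = Z T ω)
    (hV : ∀ s, s < T →
      V s =ᵐ[μ] fun ω => min (Y s ω) (max (X s ω) ((μ[V (s + 1) | ℱ s]) ω))) :
    ∃ σs : Ω → ℕ, IsStoppingTime ℱ (fun ω => (σs ω : WithTop ℕ)) ∧ (∀ ω, σs ω ∈ Set.Icc t T) ∧
      ∀ τ : Ω → ℕ, IsStoppingTime ℱ (fun ω => (τ ω : WithTop ℕ)) → (∀ ω, τ ω ∈ Set.Icc t T) →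
        μ[payoffD X Y Z τ σs | ℱ t] ≤ᵐ[μ] V t := by
  have hVY' : ∀ s, s < T → (fun s ω => -(Y s ω)) s ≤ᵐ[μ] (fun s ω => -(V s ω)) s := by
    intro s hs
    filter_upwards [hVY s hs.le] with ω h
    simpa using h
  have hXV' : ∀ s, s ≤ T → (fun s ω => -(V s ω)) s ≤ᵐ[μ] (fun s ω => -(X s ω)) s := by
    intro s hs
    rcases lt_or_eq_of_le hs with hlt | rfl
    · filter_upwards [hXV s hlt] with ω h
      simpa using h
    · filter_upwards with ω
      simp only [neg_le_neg_iff]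
      rw [hVT]
      exact hXZ s ω
  have hV' : ∀ s, s < T →
      (fun s ω => -(V s ω)) s =ᵐ[μ] fun ω => min (-(X s ω))
        (max (-(Y s ω)) ((μ[(fun s ω => -(V s ω)) (s + 1) | ℱ s]) ω)) := by
    intro s hs
    have hn : μ[(fun ω => -(V (s + 1) ω)) | ℱ s] =ᵐ[μ]
        fun ω => -((μ[V (s + 1) | ℱ s]) ω) := condExp_neg (V (s + 1)) (ℱ s)
    filter_upwards [hV s hs, hn] with ω h1 h2
    show -(V s ω) = _
    rw [h2, h1]
    exact neg_min_max_aux (hXY s ω)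
  obtain ⟨σs, hst, hsmem, hkey⟩ := keyA (ℱ := ℱ) (μ := μ) ht
    (X := fun s ω => -(Y s ω)) (Y := fun s ω => -(X s ω)) (Z := fun s ω => -(Z s ω))
    (V := fun s ω => -(V s ω))
    (fun s => (hYa s).neg) (fun s => (hVa s).neg)
    (fun s => (hYi s).neg) (fun s => (hXi s).neg) (fun s => (hZi s).neg)
    (fun s => (hVi s).neg)
    (fun s ω => neg_le_neg (hXY s ω)) (fun s ω => neg_le_neg (hZY s ω))
    hVY' hXV'
    (fun ω => by show -(Y T ω) = -(Z T ω); rw [htermY])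
    (fun ω => by show -(V T ω) = -(Z T ω); rw [hVT])
    hV'
  refine ⟨σs, hst, hsmem, ?_⟩
  intro τ hτ hτb
  have h := hkey τ hτ hτb
  have hpe : payoffD (fun s ω => -(Y s ω)) (fun s ω => -(X s ω)) (fun s ω => -(Z s ω)) σs τ
      = fun ω => -(payoffD X Y Z τ σs ω) := by
    funext ω
    simp only [payoffD]
    rcases lt_trichotomy (σs ω) (τ ω) with hlt | heq | hlt
    · rw [if_pos hlt, if_neg (by omega), if_pos hlt]
    · rw [if_neg (by omega), if_neg (by omega), if_neg (by omega), if_neg (by omega), heq]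
    · rw [if_neg (by omega), if_pos hlt, if_pos hlt]
  rw [hpe] at h
  have hneg : μ[fun ω => -(payoffD X Y Z τ σs ω) | ℱ t] =ᵐ[μ]
      fun ω => -((μ[payoffD X Y Z τ σs | ℱ t]) ω) := condExp_neg _ _
  filter_upwards [h, hneg] with ω h1 h2
  rw [h2] at h1
  simpa using h1

end Aux

/-- In the discrete-time standard Dynkin game with `X ≤ Z ≤ Y`, the backward-induction
process `V` satisfies, for each `t`,
`V_t = essinf_{σ ∈ T_[t,T]} esssup_{τ ∈ T_[t,T]} E[R(τ,σ)|ℱ t]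
     = esssup_{τ ∈ T_[t,T]} essinf_{σ ∈ T_[t,T]} E[R(τ,σ)|ℱ t]`,
i.e. the game has a value equal to `V_t`. -/
theorem stmt3 {Ω : Type*} {m0 : MeasurableSpace Ω} (μ : Measure Ω) [IsProbabilityMeasure μ]
    (ℱ : Filtration ℕ m0) (T : ℕ)
    (X Y Z V : ℕ → Ω → ℝ)
    (hXa : Adapted ℱ X) (hYa : Adapted ℱ Y) (hZa : Adapted ℱ Z)
    (hXi : ∀ t, Integrable (X t) μ) (hYi : ∀ t, Integrable (Y t) μ)
    (hZi : ∀ t, Integrable (Z t) μ)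
    (hXZ : ∀ t ω, X t ω ≤ Z t ω) (hZY : ∀ t ω, Z t ω ≤ Y t ω)
    (htermX : ∀ ω, X T ω = Z T ω) (htermY : ∀ ω, Z T ω = Y T ω)
    (hVT : ∀ ω, V T ω = Z T ω)
    (hV : ∀ t, t < T → ∀ ω, V t ω = min (Y t ω) (max (X t ω) ((μ[V (t + 1) | ℱ t]) ω))) :
    ∀ t, t ≤ T →
      (∀ (S : {σ : Ω → ℕ // IsStoppingTime ℱ (fun ω => (σ ω : WithTop ℕ)) ∧ ∀ ω, σ ω ∈ Set.Icc t T} → Ω → ℝ)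
          (m : Ω → ℝ),
        (∀ σ, IsEssSupFam μ
          (fun τ : {τ : Ω → ℕ // IsStoppingTime ℱ (fun ω => (τ ω : WithTop ℕ)) ∧ ∀ ω, τ ω ∈ Set.Icc t T} =>
            μ[payoffD X Y Z τ.1 σ.1 | ℱ t]) (S σ)) →
        IsEssInfFam μ S m → m =ᵐ[μ] V t) ∧
      (∀ (I : {τ : Ω → ℕ // IsStoppingTime ℱ (fun ω => (τ ω : WithTop ℕ)) ∧ ∀ ω, τ ω ∈ Set.Icc t T} → Ω → ℝ)
          (m : Ω → ℝ),
        (∀ τ, IsEssInfFam μ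
          (fun σ : {σ : Ω → ℕ // IsStoppingTime ℱ (fun ω => (σ ω : WithTop ℕ)) ∧ ∀ ω, σ ω ∈ Set.Icc t T} =>
            μ[payoffD X Y Z τ.1 σ.1 | ℱ t]) (I τ)) →
        IsEssSupFam μ I m → m =ᵐ[μ] V t) := by
  intro t ht
  have hXY : ∀ s ω, X s ω ≤ Y s ω := fun s ω => (hXZ s ω).trans (hZY s ω)
  -- the truncated process `V'`
  set V' : ℕ → Ω → ℝ := fun s => V (min s T) with hV'def
  have e1 : ∀ s, s ≤ T → V' s = V s := fun s hs => by
    simp only [hV'def, min_eq_left hs]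
  have hVTfun : V T = Z T := funext hVT
  -- properties of `V` for `s ≤ T`
  have hVfun : ∀ s, s < T →
      V s = fun ω => min (Y s ω) (max (X s ω) ((μ[V (s + 1) | ℱ s]) ω)) :=
    fun s hs => funext (hV s hs)
  have hVsm : ∀ s, s ≤ T → StronglyMeasurable[ℱ s] (V s) := by
    intro s hs
    rcases lt_or_eq_of_le hs with hlt | rfl
    · rw [hVfun s hlt]
      have h2 : (fun ω => min (Y s ω) (max (X s ω) ((μ[V (s + 1) | ℱ s]) ω)))
          = Y s ⊓ (X s ⊔ μ[V (s + 1) | ℱ s]) := by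
        funext ω
        simp [Pi.inf_apply, Pi.sup_apply]
      rw [h2]
      letI : MeasurableSpace Ω := ℱ s
      exact (hYa s).stronglyMeasurable.inf ((hXa s).stronglyMeasurable.sup stronglyMeasurable_condExp)
    · rw [hVTfun]
      exact (hZa s).stronglyMeasurable
  have hVsi : ∀ s, s ≤ T → Integrable (V s) μ := by
    intro s hs
    rcases lt_or_eq_of_le hs with hlt | rfl
    · rw [hVfun s hlt]
      have h2 : (fun ω => min (Y s ω) (max (X s ω) ((μ[V (s + 1) | ℱ s]) ω)))
          = Y s ⊓ (X s ⊔ μ[V (s + 1) | ℱ s]) := by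
        funext ω
        simp [Pi.inf_apply, Pi.sup_apply]
      rw [h2]
      exact (hYi s).inf ((hXi s).sup integrable_condExp)
    · rw [hVTfun]
      exact hZi s
  have hV'a : Adapted ℱ V' := fun s =>
    ((hVsm (min s T) (min_le_right s T)).mono (ℱ.mono (min_le_left s T))).measurable
  have hV'i : ∀ s, Integrable (V' s) μ := fun s => by
    rw [show V' s = V (min s T) from rfl]
    exact hVsi (min s T) (min_le_right s T)
  have hXV' : ∀ s, s < T → X s ≤ᵐ[μ] V' s := by
    intro s hs
    rw [e1 s hs.le]
    filter_upwards with ω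
    rw [hV s hs ω]
    exact le_min (hXY s ω) (le_max_left _ _)
  have hV'Y : ∀ s, s ≤ T → V' s ≤ᵐ[μ] Y s := by
    intro s hs
    rw [e1 s hs]
    rcases lt_or_eq_of_le hs with hlt | rfl
    · filter_upwards with ω
      rw [hV s hlt ω]
      exact min_le_left _ _
    · filter_upwards with ω
      rw [hVT ω]
      exact hZY s ω
  have hV'T : ∀ ω, V' T ω = Z T ω := by
    intro ω
    rw [show V' T = V T from e1 T le_rfl]
    exact hVT ω
  have hV'rec : ∀ s, s < T →
      V' s =ᵐ[μ] fun ω => min (Y s ω) (max (X s ω) ((μ[V' (s + 1) | ℱ s]) ω)) := by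
    intro s hs
    rw [e1 s hs.le, e1 (s + 1) hs]
    filter_upwards with ω
    exact hV s hs ω
  obtain ⟨τs, hτst, hτmem, hτkey⟩ := keyA (ℱ := ℱ) (μ := μ) ht hXa hV'a
    hXi hYi hZi hV'i hXY hXZ hXV' hV'Y htermX hV'T hV'rec
  obtain ⟨σs, hσst, hσmem, hσkey⟩ := keyB (ℱ := ℱ) (μ := μ) ht hYa hV'a
    hXi hYi hZi hV'i hXY hXZ hZY hXV' hV'Y htermY hV'T hV'rec
  have hVt : V' t = V t := e1 t ht
  rw [hVt] at hτkey hσkey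
  set τpair : {τ : Ω → ℕ // IsStoppingTime ℱ (fun ω => (τ ω : WithTop ℕ)) ∧ ∀ ω, τ ω ∈ Set.Icc t T} :=
    ⟨τs, hτst, hτmem⟩ with hτpair
  set σpair : {σ : Ω → ℕ // IsStoppingTime ℱ (fun ω => (σ ω : WithTop ℕ)) ∧ ∀ ω, σ ω ∈ Set.Icc t T} :=
    ⟨σs, hσst, hσmem⟩ with hσpair
  constructor
  · intro S m hS hm
    have h1 : V t ≤ᵐ[μ] m := by
      refine hm.2 (V t) (fun σ => ?_)
      exact (hτkey σ.1 σ.2.1 σ.2.2).trans ((hS σ).1 τpair)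
    have h2 : m ≤ᵐ[μ] V t := by
      refine (hm.1 σpair).trans ((hS σpair).2 (V t) (fun τ => ?_))
      exact hσkey τ.1 τ.2.1 τ.2.2
    exact h2.antisymm h1
  · intro I m hI hm
    have h1 : m ≤ᵐ[μ] V t := by
      refine hm.2 (V t) (fun τ => ?_)
      exact ((hI τ).1 σpair).trans (hσkey τ.1 τ.2.1 τ.2.2)
    have h2 : V t ≤ᵐ[μ] m := by
      refine ((hI τpair).2 (V t) (fun σ => ?_)).trans (hm.1 τpair)
      exact hτkey σ.1 σ.2.1 σ.2.2
    exact h1.antisymm h2
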